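/- Let R0 > 0 and let m : [0,∞) × [0,R0] → [0,∞) be a function such that j ↦ m(j,r) is nonincreasing for each fixed r and r ↦ m(j,r) is nondecreasing for each fixed j. Suppose there exist k0 ≥ 0, C > 0, ν > 0, δ > 0 and μ > 1 such that m(j,r) ≤ C · m(k,R)^μ / ((j−k)^ν (R−r)^δ) for all j > k ≥ k0 and all 0 ≤ r < R ≤ R0. Then for every σ with 0 < σ < 1 one has m(k0 + d, (1−σ)R0) = 0, where d is the positive real number determined by d^ν = 2^{(ν+δ)·μ/(μ−1)} · C · m(k0,R0)^{μ−1} / (σ^δ R0^δ). -/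
import Mathlib

open Real

lemma stampacchia_key (C M ν δ μ σ R0 d α : ℝ) (n : ℕ)
    (hC : 0 < C) (hM : 0 < M) (hν : 0 < ν) (hδ : 0 < δ) (hμ : 1 < μ)
    (hσ : 0 < σ) (hR0 : 0 < R0) (hd : 0 < d)
    (hα : α * (μ - 1) = ν + δ)
    (hdν : d ^ ν = 2 ^ (α * μ) * C * M ^ (μ - 1) / (σ ^ δ * R0 ^ δ)) :
    C * (M * ((2:ℝ) ^ (-α)) ^ n) ^ μ /
      ((d * (2:ℝ) ^ (-((n:ℝ)+1))) ^ ν * (σ * R0 * (2:ℝ) ^ (-((n:ℝ)+1))) ^ δ)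
    = M * ((2:ℝ) ^ (-α)) ^ (n+1) := by
  have h2 : (0:ℝ) < 2 := two_pos
  -- convert nat powers of 2^(-α) into rpow
  have hcn : ((2:ℝ) ^ (-α)) ^ n = (2:ℝ) ^ (-α * (n:ℝ)) := by
    rw [← Real.rpow_natCast ((2:ℝ) ^ (-α)) n, ← Real.rpow_mul h2.le]
  have hcn1 : ((2:ℝ) ^ (-α)) ^ (n+1) = (2:ℝ) ^ (-α * ((n:ℝ)+1)) := by
    rw [← Real.rpow_natCast ((2:ℝ) ^ (-α)) (n+1), ← Real.rpow_mul h2.le]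
    push_cast; ring_nf
  rw [hcn, hcn1]
  have hLpos : 0 < C * (M * (2:ℝ) ^ (-α * (n:ℝ))) ^ μ /
      ((d * (2:ℝ) ^ (-((n:ℝ)+1))) ^ ν * (σ * R0 * (2:ℝ) ^ (-((n:ℝ)+1))) ^ δ) := by
    positivity
  have hRpos : 0 < M * (2:ℝ) ^ (-α * ((n:ℝ)+1)) := by positivity
  rw [← Real.exp_log hLpos, ← Real.exp_log hRpos]
  congr 1
  have Hlog : ν * Real.log d =
      (α*μ) * Real.log 2 + Real.log C + (μ-1) * Real.log M
        - (δ * Real.log σ + δ * Real.log R0) := by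
    have h := congrArg Real.log hdν
    rw [Real.log_rpow hd, Real.log_div (by positivity) (by positivity),
        Real.log_mul (by positivity) (by positivity),
        Real.log_mul (by positivity) (by positivity),
        Real.log_rpow h2, Real.log_rpow hM,
        Real.log_mul (by positivity) (by positivity),
        Real.log_rpow hσ, Real.log_rpow hR0] at h
    linarith
  rw [Real.log_div (by positivity) (by positivity),
      Real.log_mul (by positivity) (by positivity),
      Real.log_mul (by positivity) (by positivity),
      Real.log_rpow (by positivity : (0:ℝ) < M * (2:ℝ) ^ (-α * (n:ℝ))),
      Real.log_mul (by positivity) (by positivity),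
      Real.log_rpow (by positivity : (0:ℝ) < d * (2:ℝ) ^ (-((n:ℝ)+1))),
      Real.log_rpow (by positivity : (0:ℝ) < σ * R0 * (2:ℝ) ^ (-((n:ℝ)+1))),
      Real.log_mul (by positivity) (by positivity),
      Real.log_mul (by positivity) (by positivity),
      Real.log_mul (by positivity) (by positivity),
      Real.log_mul (by positivity) (by positivity),
      Real.log_rpow h2, Real.log_rpow h2, Real.log_rpow h2]
  linear_combination (-1 : ℝ) * Hlog - ((n:ℝ)+1) * Real.log 2 * hα

set_option maxHeartbeats 1000000 in
/-- Stampacchia-type iteration lemma for a two-parameter level-set function. -/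
theorem stampacchia_two_parameter
    (R0 : ℝ) (hR0 : 0 < R0) (m : ℝ → ℝ → ℝ)
    (hm_nonneg : ∀ j r, 0 ≤ j → 0 ≤ r → r ≤ R0 → 0 ≤ m j r)
    (hm_j : ∀ r, 0 ≤ r → r ≤ R0 → ∀ j₁ j₂, 0 ≤ j₁ → j₁ ≤ j₂ → m j₂ r ≤ m j₁ r)
    (hm_r : ∀ j, 0 ≤ j → ∀ r₁ r₂, 0 ≤ r₁ → r₁ ≤ r₂ → r₂ ≤ R0 → m j r₁ ≤ m j r₂)
    (k0 C ν δ μ : ℝ) (hk0 : 0 ≤ k0) (hC : 0 < C) (hν : 0 < ν) (hδ : 0 < δ) (hμ : 1 < μ)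
    (hiter : ∀ j k r R, k0 ≤ k → k < j → 0 ≤ r → r < R → R ≤ R0 →
      m j r ≤ C * (m k R) ^ μ / ((j - k) ^ ν * (R - r) ^ δ))
    (σ : ℝ) (hσ0 : 0 < σ) (hσ1 : σ < 1)
    (d : ℝ) (hd : 0 < d)
    (hdν : d ^ ν = 2 ^ ((ν + δ) * μ / (μ - 1)) * C * (m k0 R0) ^ (μ - 1) / (σ ^ δ * R0 ^ δ)) :
    m (k0 + d) ((1 - σ) * R0) = 0 := by
  have hμ1 : (0:ℝ) < μ - 1 := by linarith
  set M := m k0 R0 with hMdef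
  have hM0 : 0 ≤ M := hm_nonneg k0 R0 hk0 (by linarith) le_rfl
  rcases eq_or_lt_of_le hM0 with hM | hM
  · -- M = 0 contradicts d > 0
    exfalso
    rw [← hM, Real.zero_rpow (by linarith : μ - 1 ≠ 0)] at hdν
    have : (0:ℝ) < d ^ ν := Real.rpow_pos_of_pos hd ν
    rw [hdν] at this
    simp at this
  -- now M > 0
  set α : ℝ := (ν + δ) / (μ - 1) with hαdef
  have hα : α * (μ - 1) = ν + δ := by rw [hαdef, div_mul_cancel₀ _ (ne_of_gt hμ1)]
  have hα0 : 0 < α := by rw [hαdef]; exact div_pos (by linarith) hμ1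
  have hdν' : d ^ ν = 2 ^ (α * μ) * C * M ^ (μ - 1) / (σ ^ δ * R0 ^ δ) := by
    rw [hdν]; congr 2; rw [hαdef]; ring
  set c : ℝ := (2:ℝ) ^ (-α) with hcdef
  have hc0 : 0 < c := Real.rpow_pos_of_pos two_pos _
  have hc1 : c < 1 := Real.rpow_lt_one_of_one_lt_of_neg one_lt_two (by linarith)
  set t : ℕ → ℝ := fun n => (2:ℝ) ^ (-(n:ℝ)) with htdef
  have ht0 : ∀ n, 0 < t n := fun n => Real.rpow_pos_of_pos two_pos _
  have ht1 : ∀ n, t n ≤ 1 := fun n =>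
    Real.rpow_le_one_of_one_le_of_nonpos one_le_two (neg_nonpos.mpr (Nat.cast_nonneg n))
  have htz : t 0 = 1 := by simp [htdef]
  have htcast : ∀ n : ℕ, t (n+1) = (2:ℝ) ^ (-((n:ℝ)+1)) := by
    intro n
    show (2:ℝ) ^ (-(((n+1:ℕ)):ℝ)) = (2:ℝ) ^ (-((n:ℝ)+1))
    congr 1
    push_cast
    ring
  have hts : ∀ n, t n = 2 * t (n+1) := by
    intro n
    rw [htcast n]
    show (2:ℝ) ^ (-((n:ℕ):ℝ)) = 2 * (2:ℝ) ^ (-(((n:ℕ):ℝ)+1))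
    rw [show (2:ℝ) * (2:ℝ) ^ (-(((n:ℕ):ℝ)+1)) = (2:ℝ) ^ (1:ℝ) * (2:ℝ) ^ (-(((n:ℕ):ℝ)+1)) by
      rw [Real.rpow_one], ← Real.rpow_add two_pos]
    congr 1
    ring
  set k : ℕ → ℝ := fun n => k0 + d * (1 - t n) with hkdef
  set r : ℕ → ℝ := fun n => (1 - σ) * R0 + σ * R0 * t n with hrdef
  have hk_eq : ∀ n, k n = k0 + d * (1 - t n) := fun _ => rfl
  have hr_eq : ∀ n, r n = (1 - σ) * R0 + σ * R0 * t n := fun _ => rfl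
  have hk0n : ∀ n, k0 ≤ k n := by
    intro n; rw [hk_eq]
    nlinarith [ht1 n, ht0 n]
  have hknd : ∀ n, k n ≤ k0 + d := by
    intro n; rw [hk_eq]
    nlinarith [ht0 n]
  have hkn0 : ∀ n, 0 ≤ k n := fun n => le_trans hk0 (hk0n n)
  have hrn0 : ∀ n, 0 ≤ r n := by
    intro n; rw [hr_eq]
    nlinarith [mul_pos (mul_pos hσ0 hR0) (ht0 n),
      mul_nonneg (by linarith : (0:ℝ) ≤ 1 - σ) hR0.le]
  have hrnR0 : ∀ n, r n ≤ R0 := by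
    intro n; rw [hr_eq]
    nlinarith [mul_nonneg (mul_pos hσ0 hR0).le (by linarith [ht1 n] : (0:ℝ) ≤ 1 - t n)]
  have hrlow : ∀ n, (1 - σ) * R0 ≤ r n := by
    intro n; rw [hr_eq]
    nlinarith [mul_pos (mul_pos hσ0 hR0) (ht0 n)]
  have hkstep : ∀ n, k (n+1) - k n = d * t (n+1) := by
    intro n; rw [hk_eq (n+1), hk_eq n, hts n]; ring
  have hrstep : ∀ n, r n - r (n+1) = σ * R0 * t (n+1) := by
    intro n; rw [hr_eq (n+1), hr_eq n, hts n]; ring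
  have hklt : ∀ n, k n < k (n+1) := by
    intro n
    have := hkstep n
    nlinarith [mul_pos hd (ht0 (n+1))]
  have hrlt : ∀ n, r (n+1) < r n := by
    intro n
    have := hrstep n
    nlinarith [mul_pos (mul_pos hσ0 hR0) (ht0 (n+1))]
  -- the induction
  have claim : ∀ n, m (k n) (r n) ≤ M * c ^ n := by
    intro n
    induction n with
    | zero =>
      have hk00 : k 0 = k0 := by rw [hk_eq, htz]; ring
      have hr00 : r 0 = R0 := by rw [hr_eq, htz]; ring
      rw [hk00, hr00]
      simp [hMdef]
    | succ n ih =>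
      have step := hiter (k (n+1)) (k n) (r (n+1)) (r n)
        (hk0n n) (hklt n) (hrn0 (n+1)) (hrlt n) (hrnR0 n)
      have hmono : (m (k n) (r n)) ^ μ ≤ (M * c ^ n) ^ μ :=
        Real.rpow_le_rpow (hm_nonneg _ _ (hkn0 n) (hrn0 n) (hrnR0 n)) ih (by linarith)
      have hden : 0 < (k (n+1) - k n) ^ ν * (r n - r (n+1)) ^ δ := by
        have h1 : 0 < k (n+1) - k n := by linarith [hklt n]
        have h2 : 0 < r n - r (n+1) := by linarith [hrlt n]
        positivity
      have step2 : m (k (n+1)) (r (n+1)) ≤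
          C * (M * c ^ n) ^ μ / ((k (n+1) - k n) ^ ν * (r n - r (n+1)) ^ δ) := by
        refine le_trans step ?_
        gcongr
      rw [show k (n+1) - k n = d * (2:ℝ) ^ (-((n:ℝ)+1)) by rw [hkstep n, htcast n],
          show r n - r (n+1) = σ * R0 * (2:ℝ) ^ (-((n:ℝ)+1)) by rw [hrstep n, htcast n]]
        at step2
      calc m (k (n+1)) (r (n+1)) ≤ _ := step2
        _ = M * c ^ (n+1) :=
          stampacchia_key C M ν δ μ σ R0 d α n hC hM hν hδ hμ hσ0 hR0 hd hα hdν'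
  -- conclude by limits
  have hx : ∀ n, m (k0 + d) ((1 - σ) * R0) ≤ M * c ^ n := by
    intro n
    have h1 : m (k0 + d) ((1 - σ) * R0) ≤ m (k0 + d) (r n) :=
      hm_r (k0 + d) (by linarith) _ _ (by nlinarith) (hrlow n) (hrnR0 n)
    have h2 : m (k0 + d) (r n) ≤ m (k n) (r n) :=
      hm_j (r n) (hrn0 n) (hrnR0 n) (k n) (k0 + d) (hkn0 n) (hknd n)
    exact le_trans h1 (le_trans h2 (claim n))
  have hlim : Filter.Tendsto (fun n : ℕ => M * c ^ n) Filter.atTop (nhds 0) := by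
    have := tendsto_pow_atTop_nhds_zero_of_lt_one hc0.le hc1
    simpa using this.const_mul M
  have hle0 : m (k0 + d) ((1 - σ) * R0) ≤ 0 := ge_of_tendsto' hlim hx
  have hge0 : 0 ≤ m (k0 + d) ((1 - σ) * R0) :=
    hm_nonneg _ _ (by linarith) (by nlinarith) (by nlinarith)
  linarith
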